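/- Let γ ∈ ℂ with 0 < |γ| < 1. Then the kernel equation, regarded as a cubic polynomial equation in δ, has exactly one root δ (counted with multiplicity) with |δ| < |γ|, and that root is nonzero. -/

import Mathlib

set_option maxHeartbeats 1000000


open Polynomial in
/-- The kernel equation as a cubic polynomial in δ (for fixed γ):
λāa·δ³ + (λ̄āa·γ + λ(a²+ā²))·δ² − (1 − (λ̄(ā²+a²)+λaā))·γ·δ + λ̄āa·γ² . -/
noncomputable def kernelCubic (a lam : ℝ) (g : ℂ) : Polynomial ℂ :=
  C ((lam:ℂ)*(1-(a:ℂ))*(a:ℂ)) * X^3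
  + C ((1-(lam:ℂ))*(1-(a:ℂ))*(a:ℂ)*g + (lam:ℂ)*((a:ℂ)^2+(1-(a:ℂ))^2)) * X^2
  - C ((1 - ((1-(lam:ℂ))*((1-(a:ℂ))^2+(a:ℂ)^2) + (lam:ℂ)*(a:ℂ)*(1-(a:ℂ)))) * g) * X
  + C ((1-(lam:ℂ))*(1-(a:ℂ))*(a:ℂ)*g^2)

namespace Stmt4Aux

/-- Key analytic lemma: the cubic `A z³ + (Cc g + B) z² - (A+B+2Cc) g z + Cc g²`
has a unique root `u` in the open disc `|z| < |g|`, `u` is nonzero, and the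
derivative of the cubic does not vanish at `u`. -/
lemma key {A B Cc : ℝ} (hA : 0 < A) (hB : 0 < B) (hCc : 0 < Cc) {g : ℂ}
    (hg0 : g ≠ 0) (hg1 : ‖g‖ < 1) :
    ∃ u : ℂ, u ≠ 0 ∧ ‖u‖ < ‖g‖ ∧
      ((A:ℂ)*u^3 + ((Cc:ℂ)*g+(B:ℂ))*u^2 - (((A+B+2*Cc : ℝ)):ℂ)*g*u + (Cc:ℂ)*g^2 = 0) ∧
      (∀ z : ℂ, (A:ℂ)*z^3 + ((Cc:ℂ)*g+(B:ℂ))*z^2 - (((A+B+2*Cc : ℝ)):ℂ)*g*z + (Cc:ℂ)*g^2 = 0 →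
        ‖z‖ < ‖g‖ → z = u) ∧
      (3*(A:ℂ)*u^2 + 2*((Cc:ℂ)*g+(B:ℂ))*u - (((A+B+2*Cc : ℝ)):ℂ)*g ≠ 0) := by
  set r := ‖g‖ with hr
  have hr0 : 0 < r := norm_pos_iff.mpr hg0
  have hK0 : 0 < A + B + 2*Cc := by linarith
  -- a root ρ ∈ (0, r) of H(s) = A s³ + (Cc r + B) s² - K r s + Cc r²
  obtain ⟨ρ, hρIoo, hHρ⟩ : ∃ ρ ∈ Set.Ioo (0:ℝ) r,
      A*ρ^3 + (Cc*r+B)*ρ^2 - (A+B+2*Cc)*r*ρ + Cc*r^2 = 0 := by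
    have hcont : ContinuousOn
        (fun s : ℝ => A*s^3 + (Cc*r+B)*s^2 - (A+B+2*Cc)*r*s + Cc*r^2) (Set.Icc 0 r) := by
      fun_prop
    have h0 : (0:ℝ) ∈ Set.Ioo
        (A*r^3 + (Cc*r+B)*r^2 - (A+B+2*Cc)*r*r + Cc*r^2)
        (A*0^3 + (Cc*r+B)*0^2 - (A+B+2*Cc)*r*0 + Cc*r^2) := by
      constructor
      · nlinarith [mul_pos (mul_pos (add_pos hA hCc) hr0) hr0]
      · nlinarith [mul_pos hCc (mul_pos hr0 hr0)]
    have := intermediate_value_Ioo' hr0.le hcont h0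
    obtain ⟨ρ, hρ, hval⟩ := this
    exact ⟨ρ, hρ, hval⟩
  obtain ⟨hρ0, hρr⟩ := hρIoo
  -- the quadratic cofactor G is negative on [0, r]
  have hG0 : A*0^2 + (A*ρ + Cc*r + B)*0 + (A*ρ^2 + (Cc*r+B)*ρ - (A+B+2*Cc)*r) < 0 := by
    nlinarith [mul_pos hCc (mul_pos hr0 hr0)]
  have hGr : A*r^2 + (A*ρ + Cc*r + B)*r + (A*ρ^2 + (Cc*r+B)*ρ - (A+B+2*Cc)*r) < 0 := by
    nlinarith [mul_pos (mul_pos (add_pos hA hCc) hr0) hr0, mul_pos hρ0 (sub_pos.mpr hρr)]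
  have hGmid : ∀ s : ℝ, 0 ≤ s → s ≤ r →
      A*s^2 + (A*ρ + Cc*r + B)*s + (A*ρ^2 + (Cc*r+B)*ρ - (A+B+2*Cc)*r) < 0 := by
    intro s h1 h2
    rcases eq_or_lt_of_le h1 with h | h
    · rw [← h]; exact hG0
    · have t2 : s * (A*r^2 + (A*ρ + Cc*r + B)*r + (A*ρ^2 + (Cc*r+B)*ρ - (A+B+2*Cc)*r)) < 0 :=
        mul_neg_of_pos_of_neg h hGr
      have t1 : (r - s) * (A*0^2 + (A*ρ + Cc*r + B)*0 + (A*ρ^2 + (Cc*r+B)*ρ - (A+B+2*Cc)*r)) ≤ 0 :=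
        mul_nonpos_of_nonneg_of_nonpos (by linarith) hG0.le
      have t3 : A*r*s*(s-r) ≤ 0 :=
        mul_nonpos_of_nonneg_of_nonpos (by positivity) (by linarith)
      nlinarith [t1, t2, t3, hr0]
  have hGρ : 3*A*ρ^2 + 2*(Cc*r+B)*ρ - (A+B+2*Cc)*r < 0 := by
    have := hGmid ρ hρ0.le hρr.le
    nlinarith [this]
  -- basic absolute value facts
  have hCgB : ‖(Cc:ℂ)*g+(B:ℂ)‖ ≤ Cc*r + B := by
    refine (norm_add_le _ _).trans ?_
    rw [norm_mul, Complex.norm_real, Real.norm_eq_abs, Complex.norm_real, Real.norm_eq_abs, abs_of_pos hCc, abs_of_pos hB]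
  have habsA : ∀ z : ℂ, ‖(A:ℂ)*z^3‖ = A * (‖z‖)^3 := by
    intro z; rw [norm_mul, norm_pow, Complex.norm_real, Real.norm_eq_abs, abs_of_pos hA]
  have habsCg2 : ‖(Cc:ℂ)*g^2‖ = Cc * r^2 := by
    rw [norm_mul, norm_pow, Complex.norm_real, Real.norm_eq_abs, abs_of_pos hCc, hr]
  have hKg0 : (((A+B+2*Cc : ℝ)):ℂ)*g ≠ 0 := by
    apply mul_ne_zero _ hg0
    exact_mod_cast hK0.ne'
  have habsKg : ‖(((A+B+2*Cc : ℝ)):ℂ)*g‖ = (A+B+2*Cc)*r := by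
    rw [norm_mul, Complex.norm_real, Real.norm_eq_abs, abs_of_pos hK0, hr]
  -- bound on the "numerator" part
  have hbound : ∀ z : ℂ, ∀ s : ℝ, ‖z‖ ≤ s →
      ‖(A:ℂ)*z^3 + ((Cc:ℂ)*g+(B:ℂ))*z^2 + (Cc:ℂ)*g^2‖
        ≤ A*s^3 + (Cc*r+B)*s^2 + Cc*r^2 := by
    intro z s hz
    have h0 : 0 ≤ ‖z‖ := norm_nonneg z
    have h0s : 0 ≤ s := h0.trans hz
    have e1 : ‖(A:ℂ)*z^3‖ ≤ A*s^3 := by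
      rw [habsA]
      have := pow_le_pow_left₀ h0 hz 3
      nlinarith [this]
    have e2 : ‖((Cc:ℂ)*g+(B:ℂ))*z^2‖ ≤ (Cc*r+B)*s^2 := by
      rw [norm_mul, norm_pow]
      have h1 : (‖z‖)^2 ≤ s^2 := pow_le_pow_left₀ h0 hz 2
      have h2 : (0:ℝ) ≤ (‖z‖)^2 := by positivity
      nlinarith [norm_nonneg ((Cc:ℂ)*g+(B:ℂ)), hCgB, mul_pos hCc hr0, hB]
    calc ‖(A:ℂ)*z^3 + ((Cc:ℂ)*g+(B:ℂ))*z^2 + (Cc:ℂ)*g^2‖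
        ≤ ‖(A:ℂ)*z^3 + ((Cc:ℂ)*g+(B:ℂ))*z^2‖ + ‖(Cc:ℂ)*g^2‖ :=
          norm_add_le _ _
      _ ≤ ‖(A:ℂ)*z^3‖ + ‖((Cc:ℂ)*g+(B:ℂ))*z^2‖
            + ‖(Cc:ℂ)*g^2‖ := by
          have := norm_add_le ((A:ℂ)*z^3) (((Cc:ℂ)*g+(B:ℂ))*z^2)
          linarith
      _ ≤ A*s^3 + (Cc*r+B)*s^2 + Cc*r^2 := by rw [habsCg2]; linarith
  -- any root of modulus < r has modulus ≤ ρ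
  have hroot_small : ∀ z : ℂ,
      (A:ℂ)*z^3 + ((Cc:ℂ)*g+(B:ℂ))*z^2 - (((A+B+2*Cc : ℝ)):ℂ)*g*z + (Cc:ℂ)*g^2 = 0 →
      ‖z‖ < r → ‖z‖ ≤ ρ := by
    intro z hz hzr
    by_contra hgt
    push_neg at hgt
    have h1 : (((A+B+2*Cc : ℝ)):ℂ)*g*z
        = (A:ℂ)*z^3 + ((Cc:ℂ)*g+(B:ℂ))*z^2 + (Cc:ℂ)*g^2 := by linear_combination -hz
    have h2 : (A+B+2*Cc)*r*(‖z‖)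
        ≤ A*(‖z‖)^3 + (Cc*r+B)*(‖z‖)^2 + Cc*r^2 := by
      have := hbound z (‖z‖) le_rfl
      calc (A+B+2*Cc)*r*(‖z‖)
          = ‖(((A+B+2*Cc : ℝ)):ℂ)*g*z‖ := by rw [norm_mul, habsKg]
        _ = ‖(A:ℂ)*z^3 + ((Cc:ℂ)*g+(B:ℂ))*z^2 + (Cc:ℂ)*g^2‖ := by rw [h1]
        _ ≤ _ := this
    -- but H(|z|) = (|z|-ρ)·G(|z|) < 0, contradiction
    have hGz := hGmid (‖z‖) (norm_nonneg z) hzr.le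
    have hid : A*(‖z‖)^3 + (Cc*r+B)*(‖z‖)^2
        - (A+B+2*Cc)*r*(‖z‖) + Cc*r^2
        = (‖z‖ - ρ) * (A*(‖z‖)^2 + (A*ρ + Cc*r + B)*(‖z‖)
          + (A*ρ^2 + (Cc*r+B)*ρ - (A+B+2*Cc)*r)) := by linear_combination hHρ
    nlinarith [hid, h2, mul_neg_of_pos_of_neg (sub_pos.mpr hgt) hGz]
  -- uniqueness of roots in the closed disc of radius ρ
  have huniq : ∀ z w : ℂ,
      (A:ℂ)*z^3 + ((Cc:ℂ)*g+(B:ℂ))*z^2 - (((A+B+2*Cc : ℝ)):ℂ)*g*z + (Cc:ℂ)*g^2 = 0 →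
      (A:ℂ)*w^3 + ((Cc:ℂ)*g+(B:ℂ))*w^2 - (((A+B+2*Cc : ℝ)):ℂ)*g*w + (Cc:ℂ)*g^2 = 0 →
      ‖z‖ ≤ ρ → ‖w‖ ≤ ρ → z = w := by
    intro z w hz hw haz haw
    by_contra hzw
    have hfac : (z - w) * ((A:ℂ)*(z^2+z*w+w^2) + ((Cc:ℂ)*g+(B:ℂ))*(z+w)
        - (((A+B+2*Cc : ℝ)):ℂ)*g) = 0 := by linear_combination hz - hw
    have h2 : (A:ℂ)*(z^2+z*w+w^2) + ((Cc:ℂ)*g+(B:ℂ))*(z+w) - (((A+B+2*Cc : ℝ)):ℂ)*g = 0 :=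
      (mul_eq_zero.mp hfac).resolve_left (sub_ne_zero.mpr hzw)
    have h3 : (((A+B+2*Cc : ℝ)):ℂ)*g = (A:ℂ)*(z^2+z*w+w^2) + ((Cc:ℂ)*g+(B:ℂ))*(z+w) := by
      linear_combination -h2
    have e1 : ‖z^2+z*w+w^2‖ ≤ 3*ρ^2 := by
      have b1 : ‖z^2+z*w‖ ≤ ‖z^2‖ + ‖z*w‖ :=
        norm_add_le _ _
      have b2 := norm_add_le (z^2+z*w) (w^2)
      simp only [norm_pow, norm_mul] at b1 b2
      nlinarith [norm_nonneg z, norm_nonneg w, hρ0,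
        mul_le_mul haz haw (norm_nonneg w) hρ0.le,
        pow_le_pow_left₀ (norm_nonneg z) haz 2,
        pow_le_pow_left₀ (norm_nonneg w) haw 2]
    have e2 : ‖z+w‖ ≤ 2*ρ := by
      have := norm_add_le z w; linarith
    have e3 : (A+B+2*Cc)*r ≤ 3*A*ρ^2 + 2*(Cc*r+B)*ρ := by
      calc (A+B+2*Cc)*r = ‖(((A+B+2*Cc : ℝ)):ℂ)*g‖ := habsKg.symm
        _ = ‖(A:ℂ)*(z^2+z*w+w^2) + ((Cc:ℂ)*g+(B:ℂ))*(z+w)‖ := by rw [h3]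
        _ ≤ ‖(A:ℂ)*(z^2+z*w+w^2)‖ + ‖((Cc:ℂ)*g+(B:ℂ))*(z+w)‖ :=
            norm_add_le _ _
        _ ≤ 3*A*ρ^2 + 2*(Cc*r+B)*ρ := by
            rw [norm_mul, norm_mul, Complex.norm_real, Real.norm_eq_abs, abs_of_pos hA]
            nlinarith [norm_nonneg (z+w), norm_nonneg (z^2+z*w+w^2),
              mul_le_mul hCgB e2 (norm_nonneg (z+w)) (by positivity),
              mul_le_mul_of_nonneg_left e1 hA.le]
    linarith [hGρ]
  -- existence via the Banach fixed point theorem on the closed ball of radius ρ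
  set S : Set ℂ := Metric.closedBall (0:ℂ) ρ with hS
  have hmemS : ∀ z : ℂ, z ∈ S ↔ ‖z‖ ≤ ρ := by
    intro z
    simp [hS, Metric.mem_closedBall, Complex.dist_eq]
  haveI : CompleteSpace S := IsClosed.completeSpace_coe (hs := Metric.isClosed_closedBall)
  haveI : Nonempty S := ⟨⟨0, by simp [hS, hρ0.le]⟩⟩
  set Φ : ℂ → ℂ := fun z =>
    ((A:ℂ)*z^3 + ((Cc:ℂ)*g+(B:ℂ))*z^2 + (Cc:ℂ)*g^2) / ((((A+B+2*Cc : ℝ)):ℂ)*g) with hΦdef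
  have hΦmem : ∀ z : ℂ, ‖z‖ ≤ ρ → ‖Φ z‖ ≤ ρ := by
    intro z hz
    have h1 := hbound z ρ hz
    have h2 : A*ρ^3 + (Cc*r+B)*ρ^2 + Cc*r^2 = (A+B+2*Cc)*r*ρ := by linarith
    simp only [hΦdef]
    rw [norm_div, habsKg, div_le_iff₀ (by positivity)]
    calc ‖(A:ℂ)*z^3 + ((Cc:ℂ)*g+(B:ℂ))*z^2 + (Cc:ℂ)*g^2‖
        ≤ A*ρ^3 + (Cc*r+B)*ρ^2 + Cc*r^2 := h1
      _ = ρ * ((A+B+2*Cc)*r) := by linarith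
  set L : ℝ := (3*A*ρ^2 + 2*(Cc*r+B)*ρ) / ((A+B+2*Cc)*r) with hL
  have hL0 : 0 ≤ L := by positivity
  have hL1 : L < 1 := by
    rw [hL, div_lt_one (by positivity)]
    linarith
  have hdiff : ∀ x y : ℂ, ‖x‖ ≤ ρ → ‖y‖ ≤ ρ →
      ‖Φ x - Φ y‖ ≤ L * ‖x - y‖ := by
    intro x y hx hy
    have hnum : Φ x - Φ y =
        ((x - y) * ((A:ℂ)*(x^2+x*y+y^2) + ((Cc:ℂ)*g+(B:ℂ))*(x+y))) / ((((A+B+2*Cc : ℝ)):ℂ)*g) := by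
      simp only [hΦdef]
      rw [div_sub_div_same]
      congr 1
      ring
    have e1 : ‖x^2+x*y+y^2‖ ≤ 3*ρ^2 := by
      have b1 : ‖x^2+x*y‖ ≤ ‖x^2‖ + ‖x*y‖ :=
        norm_add_le _ _
      have b2 := norm_add_le (x^2+x*y) (y^2)
      simp only [norm_pow, norm_mul] at b1 b2
      nlinarith [norm_nonneg x, norm_nonneg y, hρ0,
        mul_le_mul hx hy (norm_nonneg y) hρ0.le,
        pow_le_pow_left₀ (norm_nonneg x) hx 2,
        pow_le_pow_left₀ (norm_nonneg y) hy 2]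
    have e2 : ‖x+y‖ ≤ 2*ρ := by
      have := norm_add_le x y; linarith
    have e3 : ‖(A:ℂ)*(x^2+x*y+y^2) + ((Cc:ℂ)*g+(B:ℂ))*(x+y)‖
        ≤ 3*A*ρ^2 + 2*(Cc*r+B)*ρ := by
      refine (norm_add_le _ _).trans ?_
      rw [norm_mul, norm_mul, Complex.norm_real, Real.norm_eq_abs, abs_of_pos hA]
      nlinarith [norm_nonneg (x+y), norm_nonneg (x^2+x*y+y^2),
        mul_le_mul hCgB e2 (norm_nonneg (x+y)) (by positivity),
        mul_le_mul_of_nonneg_left e1 hA.le]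
    rw [hnum, norm_div, habsKg, norm_mul, div_le_iff₀ (by positivity)]
    have hLmul : L * ((A+B+2*Cc)*r) = 3*A*ρ^2 + 2*(Cc*r+B)*ρ := by
      rw [hL]; field_simp
    calc ‖x - y‖ * ‖(A:ℂ)*(x^2+x*y+y^2) + ((Cc:ℂ)*g+(B:ℂ))*(x+y)‖
        ≤ ‖x - y‖ * (3*A*ρ^2 + 2*(Cc*r+B)*ρ) := by
          exact mul_le_mul_of_nonneg_left e3 (norm_nonneg _)
      _ = L * ‖x - y‖ * ((A+B+2*Cc)*r) := by
          linear_combination (-‖x - y‖) * hLmul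
  set F : S → S := fun x => ⟨Φ x.1, (hmemS _).mpr (hΦmem _ ((hmemS _).mp x.2))⟩ with hF
  have hContr : ContractingWith L.toNNReal F := by
    constructor
    · rw [← Real.toNNReal_one]
      exact (Real.toNNReal_lt_toNNReal_iff (by norm_num)).mpr hL1
    · refine LipschitzWith.of_dist_le_mul ?_
      intro x y
      rw [Subtype.dist_eq, Subtype.dist_eq, Complex.dist_eq, Complex.dist_eq,
        Real.coe_toNNReal _ hL0]
      exact hdiff _ _ ((hmemS _).mp x.2) ((hmemS _).mp y.2)
  set u : ℂ := ((ContractingWith.fixedPoint F hContr : S) : ℂ) with hu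
  have humem : ‖u‖ ≤ ρ := (hmemS _).mp (ContractingWith.fixedPoint F hContr).2
  have hufix : Φ u = u := congrArg Subtype.val hContr.fixedPoint_isFixedPt
  have hEu : (A:ℂ)*u^3 + ((Cc:ℂ)*g+(B:ℂ))*u^2 - (((A+B+2*Cc : ℝ)):ℂ)*g*u + (Cc:ℂ)*g^2 = 0 := by
    have h := hufix
    simp only [hΦdef] at h
    rw [div_eq_iff hKg0] at h
    linear_combination h
  have hur : ‖u‖ < r := lt_of_le_of_lt humem hρr
  have hu0 : u ≠ 0 := by
    intro h0
    rw [h0] at hEu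
    simp only [ne_eq, OfNat.ofNat_ne_zero, not_false_eq_true, zero_pow, mul_zero,
      add_zero, zero_add, sub_zero] at hEu
    have : (Cc:ℂ) = 0 ∨ g^2 = 0 := mul_eq_zero.mp hEu
    rcases this with h | h
    · exact hCc.ne' (by exact_mod_cast h)
    · exact hg0 (pow_eq_zero_iff (by norm_num) |>.mp h)
  have hder : 3*(A:ℂ)*u^2 + 2*((Cc:ℂ)*g+(B:ℂ))*u - (((A+B+2*Cc : ℝ)):ℂ)*g ≠ 0 := by
    intro h
    have h3 : (((A+B+2*Cc : ℝ)):ℂ)*g = 3*(A:ℂ)*u^2 + 2*((Cc:ℂ)*g+(B:ℂ))*u := by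
      linear_combination -h
    have e3 : (A+B+2*Cc)*r ≤ 3*A*ρ^2 + 2*(Cc*r+B)*ρ := by
      calc (A+B+2*Cc)*r = ‖(((A+B+2*Cc : ℝ)):ℂ)*g‖ := habsKg.symm
        _ = ‖3*(A:ℂ)*u^2 + 2*((Cc:ℂ)*g+(B:ℂ))*u‖ := by rw [h3]
        _ ≤ ‖3*(A:ℂ)*u^2‖ + ‖2*((Cc:ℂ)*g+(B:ℂ))*u‖ :=
            norm_add_le _ _
        _ ≤ 3*A*ρ^2 + 2*(Cc*r+B)*ρ := by
            rw [show (3*(A:ℂ)*u^2) = (A:ℂ)*u^2*3 by ring,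
              show (2*((Cc:ℂ)*g+(B:ℂ))*u) = ((Cc:ℂ)*g+(B:ℂ))*u*2 by ring]
            rw [norm_mul, norm_mul, norm_mul, norm_mul, norm_pow, Complex.norm_real, Real.norm_eq_abs,
              abs_of_pos hA]
            simp only [Complex.norm_ofNat]
            nlinarith [norm_nonneg u, norm_nonneg ((Cc:ℂ)*g+(B:ℂ)),
              pow_le_pow_left₀ (norm_nonneg u) humem 2,
              mul_le_mul hCgB humem (norm_nonneg u) (by positivity)]
    linarith [hGρ]
  refine ⟨u, hu0, hur, hEu, ?_, hder⟩
  intro z hz hzr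
  exact huniq z u hz hEu (hroot_small z hz hzr) humem

end Stmt4Aux

open Polynomial in
/-- for 0 < |γ| < 1 the kernel cubic in δ has exactly one root
(with multiplicity) with |δ| < |γ|, and that root is nonzero. -/
theorem stmt4 (a lam : ℝ) (ha : 0 < a) (ha1 : a < 1) (hl : 0 < lam) (hl1 : lam < 1)
    (g : ℂ) (hg0 : g ≠ 0) (hg1 : ‖g‖ < 1) :
    Multiset.card ((kernelCubic a lam g).roots.filter
        (fun z => ‖z‖ < ‖g‖)) = 1 ∧
    ∀ z ∈ (kernelCubic a lam g).roots, ‖z‖ < ‖g‖ → z ≠ 0 := by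
  classical
  have hA : 0 < lam*(1-a)*a := mul_pos (mul_pos hl (by linarith)) ha
  have hB : 0 < lam*(a^2+(1-a)^2) :=
    mul_pos hl (by nlinarith [sq_nonneg (2*a-1)])
  have hCc : 0 < (1-lam)*(1-a)*a := mul_pos (mul_pos (by linarith) (by linarith)) ha
  obtain ⟨u, hu0, hur, hEu, huniq, hder⟩ := Stmt4Aux.key hA hB hCc hg0 hg1
  set A : ℝ := lam*(1-a)*a
  set B : ℝ := lam*(a^2+(1-a)^2)
  set Cc : ℝ := (1-lam)*(1-a)*a
  -- evaluation of the kernel cubic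
  have hev : ∀ z : ℂ, (kernelCubic a lam g).eval z
      = (A:ℂ)*z^3 + ((Cc:ℂ)*g+(B:ℂ))*z^2 - (((A+B+2*Cc : ℝ)):ℂ)*g*z + (Cc:ℂ)*g^2 := by
    intro z
    simp only [kernelCubic, eval_add, eval_sub, eval_mul, eval_pow, eval_C, eval_X]
    push_cast [A, B, Cc]
    ring
  have hP0 : kernelCubic a lam g ≠ 0 := by
    intro h
    have h0 := hev 0
    rw [h, Polynomial.eval_zero] at h0
    simp only [ne_eq, OfNat.ofNat_ne_zero, not_false_eq_true, zero_pow, mul_zero,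
      add_zero, zero_add, sub_zero] at h0
    have : (Cc:ℂ) = 0 ∨ g^2 = 0 := mul_eq_zero.mp h0.symm
    rcases this with h' | h'
    · exact hCc.ne' (by exact_mod_cast h')
    · exact hg0 (pow_eq_zero_iff (by norm_num) |>.mp h')
  -- derivative of the kernel cubic
  have hderiv : (Polynomial.derivative (kernelCubic a lam g)).eval u
      = 3*(A:ℂ)*u^2 + 2*((Cc:ℂ)*g+(B:ℂ))*u - (((A+B+2*Cc : ℝ)):ℂ)*g := by
    simp only [kernelCubic, derivative_add, derivative_sub, derivative_mul, derivative_C,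
      derivative_X_pow, derivative_X, zero_mul, zero_add, mul_one,
      eval_add, eval_sub, eval_mul, eval_pow, eval_C, eval_X, eval_natCast, eval_zero]
    push_cast [A, B, Cc]
    ring
  have huroot : u ∈ (kernelCubic a lam g).roots := by
    rw [Polynomial.mem_roots hP0]
    rw [Polynomial.IsRoot, hev]
    exact hEu
  constructor
  · have hiff : ∀ z ∈ (kernelCubic a lam g).roots,
        (‖z‖ < ‖g‖ ↔ z = u) := by
      intro z hz
      constructor
      · intro hlt
        have hzr : (kernelCubic a lam g).eval z = 0 :=
          (Polynomial.mem_roots hP0).mp hz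
        rw [hev] at hzr
        exact huniq z hzr hlt
      · rintro rfl
        exact hur
    rw [Multiset.filter_congr hiff, Multiset.filter_eq', Multiset.card_replicate,
      Polynomial.count_roots]
    refine le_antisymm ?_ ?_
    · by_contra hc
      push_neg at hc
      have h2 : (Polynomial.derivative (kernelCubic a lam g)).IsRoot u := by
        have := Polynomial.isRoot_iterate_derivative_of_lt_rootMultiplicity
          (p := kernelCubic a lam g) (t := u) (n := 1) hc
        simpa using this
      rw [Polynomial.IsRoot, hderiv] at h2
      exact hder h2
    · rw [Nat.one_le_iff_ne_zero, ← Nat.pos_iff_ne_zero]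
      exact (Polynomial.rootMultiplicity_pos hP0).mpr
        (by rw [Polynomial.IsRoot, hev]; exact hEu)
  · intro z hz hlt h0
    have hzr : (kernelCubic a lam g).eval z = 0 := (Polynomial.mem_roots hP0).mp hz
    rw [h0, hev] at hzr
    simp only [ne_eq, OfNat.ofNat_ne_zero, not_false_eq_true, zero_pow, mul_zero,
      add_zero, zero_add, sub_zero] at hzr
    have : (Cc:ℂ) = 0 ∨ g^2 = 0 := mul_eq_zero.mp hzr
    rcases this with h' | h'
    · exact hCc.ne' (by exact_mod_cast h')
    · exact hg0 (pow_eq_zero_iff (by norm_num) |>.mp h')
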